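/- There is no linear isometry V on the tensor square of a complex Hilbert space of dimension at least 2 such that V(ψ⊗ψ) = ψ⊗e for all unit vectors ψ, where e is a fixed unit vector (no-deleting). -/
import Mathlib

open scoped ComplexInnerProductSpace

theorem aux_pair {H : Type*} [NormedAddCommGroup H] [InnerProductSpace ℂ H]
    [CompleteSpace H] (hdim : 2 ≤ Module.rank ℂ H) :
    ∃ x y : H, ‖x‖ = 1 ∧ ‖y‖ = 1 ∧ ⟪x, y⟫ = 0 := by
  obtain ⟨v, hv⟩ : ∃ v : H, v ≠ 0 := by
    by_contra h
    push_neg at h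
    have : Module.rank ℂ H = 0 := by
      rw [rank_eq_zero_iff]
      intro x; exact ⟨1, one_ne_zero, by simp [h x]⟩
    rw [this] at hdim
    exact absurd hdim (by norm_num)
  set S : Submodule ℂ H := ℂ ∙ v with hS
  have : FiniteDimensional ℂ S :=
    FiniteDimensional.span_of_finite ℂ (Set.finite_singleton v)
  obtain ⟨w, hwS, hw⟩ : ∃ w ∈ Sᗮ, w ≠ 0 := by
    by_contra h
    push_neg at h
    have hbot : Sᗮ = ⊥ := by
      rw [Submodule.eq_bot_iff]; exact h
    have htop : S = ⊤ := Submodule.orthogonal_eq_bot_iff.mp hbot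
    have h1 : Module.rank ℂ S ≤ 1 := by
      simpa using rank_span_le (R := ℂ) ({v} : Set H)
    rw [htop] at h1
    have h2 : Module.rank ℂ H ≤ 1 := by
      rwa [rank_top] at h1
    exact absurd (hdim.trans h2) (by norm_num)
  have hvw : ⟪v, w⟫ = 0 :=
    (Submodule.mem_orthogonal S w).mp hwS v (Submodule.mem_span_singleton_self v)
  refine ⟨(‖v‖⁻¹ : ℂ) • v, (‖w‖⁻¹ : ℂ) • w, ?_, ?_, ?_⟩
  · rw [norm_smul]; simp [norm_ne_zero_iff.mpr hv]
  · rw [norm_smul]; simp [norm_ne_zero_iff.mpr hw]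
  · rw [inner_smul_left, inner_smul_right, hvw]; ring

/-- no-deleting: on a complex Hilbert space of dimension ≥ 2,
there is no linear isometry `V` of the tensor square with `V(ψ ⊗ ψ) = ψ ⊗ e`
for all unit vectors `ψ`. Since Mathlib has no Hilbert tensor product, the
tensor square is abstracted as a Hilbert space `K` with a bilinear map `t`
satisfying `⟨t x y, t x' y'⟩ = ⟨x, x'⟩ * ⟨y, y'⟩`. -/
theorem stmt10 {H K : Type*} [NormedAddCommGroup H] [InnerProductSpace ℂ H]
    [NormedAddCommGroup K] [InnerProductSpace ℂ K] [CompleteSpace H] [CompleteSpace K]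
    (hdim : 2 ≤ Module.rank ℂ H)
    (t : H →ₗ[ℂ] H →ₗ[ℂ] K)
    (ht : ∀ x y x' y' : H, ⟪t x y, t x' y'⟫ = ⟪x, x'⟫ * ⟪y, y'⟫)
    (e : H) (he : ‖e‖ = 1) :
    ¬ ∃ V : K →ₗ[ℂ] K,
        (∀ x y : K, ⟪V x, V y⟫ = ⟪x, y⟫) ∧
        (∀ ψ : H, ‖ψ‖ = 1 → V (t ψ ψ) = t ψ e) := by
  rintro ⟨V, hVi, hV⟩
  obtain ⟨x, y, hx, hy, hxy⟩ := aux_pair (H := H) hdim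
  have hyx : ⟪y, x⟫ = 0 := by rw [← inner_conj_symm, hxy]; simp
  have hxx : ⟪x, x⟫ = 1 := by
    rw [inner_self_eq_norm_sq_to_K, hx]; norm_num
  have hyy : ⟪y, y⟫ = 1 := by
    rw [inner_self_eq_norm_sq_to_K, hy]; norm_num
  have hee : ⟪e, e⟫ = 1 := by
    rw [inner_self_eq_norm_sq_to_K, he]; norm_num
  set s : ℝ := Real.sqrt 2 with hsdef
  have hs2 : s ^ 2 = 2 := Real.sq_sqrt (by norm_num)
  have hs0 : 0 < s := Real.sqrt_pos.mpr (by norm_num)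
  set c : ℂ := (s : ℂ)⁻¹ with hcdef
  have hcne : c ≠ 0 := by
    simp [hcdef, Complex.ofReal_ne_zero, ne_of_gt hs0]
  set ψ : H := c • (x + y) with hψdef
  have hnxy : ‖x + y‖ = s := by
    have h1 : ‖x + y‖ ^ 2 = 2 := by
      have h := @norm_add_sq ℂ H _ _ _ x y
      simp only [hxy, map_zero] at h
      rw [hx, hy] at h
      rw [h]; norm_num
    nlinarith [norm_nonneg (x + y), hs0.le]
  have hψ : ‖ψ‖ = 1 := by
    rw [hψdef, norm_smul, hnxy, hcdef]
    simp [abs_of_pos hs0, inv_mul_cancel₀ (ne_of_gt hs0)]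
  set A : K := t x e + t y e with hAdef
  set u : K := V (t x y) + V (t y x) with hudef
  have key2 : (c * c) • (A + u) = c • A := by
    have h1 := hV ψ hψ
    have h2 : t ψ ψ = (c * c) • (t x x + t x y + (t y x + t y y)) := by
      simp only [hψdef, map_add, map_smul, LinearMap.add_apply, LinearMap.smul_apply]
      module
    have h3 : t ψ e = c • A := by
      simp only [hψdef, hAdef, map_add, map_smul, LinearMap.add_apply, LinearMap.smul_apply]
    rw [h2, h3] at h1
    rw [← h1]
    rw [map_smul, map_add, map_add, map_add, hV x hx, hV y hy, hAdef, hudef]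
    module
  have hu : u = ((s : ℂ) - 1) • A := by
    have hcc : (c * c) ≠ 0 := mul_ne_zero hcne hcne
    have h4 : (c * c) • (A + u) = (c * c) • (((s : ℂ)⁻¹)⁻¹ • A) := by
      rw [key2, smul_smul, hcdef]
      congr 1
      field_simp
    have h5 := smul_right_injective K hcc h4
    rw [inv_inv] at h5
    rw [sub_smul, one_smul, ← h5]
    abel
  have huu : ⟪u, u⟫ = 2 := by
    rw [hudef]
    simp only [inner_add_left, inner_add_right, hVi, ht, hxx, hyy, hxy, hyx]
    ring
  have hAA : ⟪A, A⟫ = 2 := by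
    rw [hAdef]
    simp only [inner_add_left, inner_add_right, ht, hxx, hyy, hxy, hyx, hee]
    ring
  rw [hu, inner_smul_left, inner_smul_right, hAA, map_sub, Complex.conj_ofReal, map_one] at huu
  have hfinR : (s - 1) * ((s - 1) * 2) = 2 := by
    exact_mod_cast huu
  nlinarith [hs2, hs0]
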